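/- Let x = (x_1,...,x_M) be a vector of i.i.d. real random variables with mean 0, variance 1, and finite 8th moment, and for each M let B_M be a deterministic M×M real matrix with tr(B_M B_M^T) ≤ C·M^2 for a fixed constant C. Then (1/M^{3/2})( x^T B_M x − tr B_M ) → 0 almost surely as M → ∞. -/

import Mathlib

open MeasureTheory ProbabilityTheory Filter Matrix Finset
open scoped BigOperators Topology

set_option linter.unusedSectionVars false

namespace QF

/-! ### Pointwise inequalities -/

lemma pw_cube_mul (s z : ℝ) : |s^3 * z| ≤ (3*s^4 + z^4)/4 := by
  have h := abs_nonneg s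
  have h2 := abs_nonneg z
  have e : |s^3 * z| = |s|^3 * |z| := by rw [abs_mul, abs_pow]
  rw [e]
  nlinarith [sq_nonneg (|s| - |z|), sq_nonneg (|s| + |z|), sq_nonneg (|s|^2 - |z|^2),
    sq_nonneg (|s|^2 - |s| * |z|), mul_nonneg h h2, sq_nonneg s, sq_nonneg z,
    pow_abs s 4, pow_abs z 4, sq_abs s, sq_abs z]

lemma pw_sq_sq (s z : ℝ) : s^2 * z^2 ≤ (s^4 + z^4)/2 := by nlinarith [sq_nonneg (s^2 - z^2)]

lemma pw_mul_cube (s z : ℝ) : |s * z^3| ≤ (s^2*z^2 + z^4)/2 := by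
  have e : |s * z^3| = (|s| * |z|) * |z|^2 := by rw [abs_mul, abs_pow]; ring
  rw [e]
  have h1 : |s| * |z| ≤ (s^2 + z^2)/2 := by
    nlinarith [sq_nonneg (|s| - |z|), sq_abs s, sq_abs z]
  have h3 := mul_le_mul_of_nonneg_right h1 (sq_nonneg (|z|))
  have e2 : |z|^2 = z^2 := sq_abs z
  nlinarith [sq_abs z]

lemma pw_add_pow4 (a b : ℝ) : (a + b)^4 ≤ 8*a^4 + 8*b^4 := by
  nlinarith [sq_nonneg (a - b), sq_nonneg (a + b), sq_nonneg (a^2 - b^2), sq_nonneg (a^2 + b^2),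
    sq_nonneg ((a+b)^2 - 2*a^2), sq_nonneg ((a+b)^2 - 2*b^2)]

lemma pw_pow_le (m : ℕ) (hm : m ≤ 8) (t : ℝ) : |t|^m ≤ 1 + |t|^8 := by
  rcases le_or_gt (|t|) 1 with h | h
  · have : |t|^m ≤ 1 := pow_le_one₀ (abs_nonneg t) h
    nlinarith [pow_nonneg (abs_nonneg t) 8]
  · have : |t|^m ≤ |t|^8 := pow_le_pow_right₀ h.le hm
    linarith

/-! ### Cauchy-Schwarz for integrals -/

lemma integral_sq_sq_le {Ω : Type*} [MeasurableSpace Ω] {μ : Measure Ω} [IsProbabilityMeasure μ]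
    {f g : Ω → ℝ} (hfm : AEStronglyMeasurable f μ) (hgm : AEStronglyMeasurable g μ)
    (hf : Integrable (fun ω => f ω^4) μ) (hg : Integrable (fun ω => g ω^4) μ) :
    ∫ ω, f ω^2 * g ω^2 ∂μ ≤ Real.sqrt (∫ ω, f ω^4 ∂μ) * Real.sqrt (∫ ω, g ω^4 ∂μ) := by
  have hpq : Real.HolderConjugate 2 2 := Real.HolderConjugate.two_two
  have h2 : (ENNReal.ofReal (2:ℝ)) = 2 := by simp [ENNReal.ofReal_ofNat]
  have hf2m : AEStronglyMeasurable (fun ω => f ω^2) μ := by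
    simpa [pow_two, Pi.mul_def] using hfm.mul hfm
  have hg2m : AEStronglyMeasurable (fun ω => g ω^2) μ := by
    simpa [pow_two, Pi.mul_def] using hgm.mul hgm
  have hfsq : MemLp (fun ω => f ω^2) (ENNReal.ofReal (2:ℝ)) μ := by
    rw [h2]
    refine (memLp_two_iff_integrable_sq hf2m).mpr ?_
    convert hf using 2 with ω
    ring
  have hgsq : MemLp (fun ω => g ω^2) (ENNReal.ofReal (2:ℝ)) μ := by
    rw [h2]
    refine (memLp_two_iff_integrable_sq hg2m).mpr ?_
    convert hg using 2 with ω
    ring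
  have key := integral_mul_le_Lp_mul_Lq_of_nonneg hpq
    (Eventually.of_forall fun ω => sq_nonneg (f ω))
    (Eventually.of_forall fun ω => sq_nonneg (g ω)) hfsq hgsq
  have e1 : ∀ ω, (f ω^2) ^ (2:ℝ) = f ω^4 := by
    intro ω
    rw [show (2:ℝ) = ((2:ℕ):ℝ) by norm_num, Real.rpow_natCast]; ring
  have e2 : ∀ ω, (g ω^2) ^ (2:ℝ) = g ω^4 := by
    intro ω
    rw [show (2:ℝ) = ((2:ℕ):ℝ) by norm_num, Real.rpow_natCast]; ring
  simp only [e1, e2] at key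
  calc ∫ ω, f ω^2 * g ω^2 ∂μ ≤ (∫ ω, f ω^4 ∂μ) ^ ((1:ℝ)/2) * (∫ ω, g ω^4 ∂μ) ^ ((1:ℝ)/2) := key
    _ = Real.sqrt (∫ ω, f ω^4 ∂μ) * Real.sqrt (∫ ω, g ω^4 ∂μ) := by
        rw [Real.sqrt_eq_rpow, Real.sqrt_eq_rpow]




variable {Ω : Type*} [MeasurableSpace Ω] {μ : Measure Ω} [IsProbabilityMeasure μ]
  {x : ℕ → Ω → ℝ}

/-- Independence of a function of the first `n` coordinates from the `n`-th coordinate. -/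
lemma indep_master {β : Type*} [MeasurableSpace β]
    (hmeas : ∀ i, Measurable (x i))
    (hindep : iIndepFun x μ) (n : ℕ)
    (φ : (Fin n → ℝ) → β) (hφ : Measurable φ) :
    IndepFun (fun ω => φ (fun i => x i ω)) (x n) μ := by
  have hd : Disjoint (Finset.range n) ({n} : Finset ℕ) := by simp
  have h := hindep.indepFun_finset (Finset.range n) {n} hd hmeas
  let φ' : ((i : (Finset.range n : Finset ℕ)) → ℝ) → β :=
    fun v => φ (fun i => v ⟨(i : ℕ), Finset.mem_range.mpr i.2⟩)
  have hφ' : Measurable φ' := hφ.comp (measurable_pi_lambda _ (fun i => measurable_pi_apply _))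
  let ψ' : ((i : ({n} : Finset ℕ)) → ℝ) → ℝ := fun v => v ⟨n, Finset.mem_singleton_self n⟩
  have hψ' : Measurable ψ' := measurable_pi_apply _
  exact h.comp hφ' hψ'

lemma integrable_comp_pow
    (hmeas : ∀ i, Measurable (x i)) (hident : ∀ i, IdentDistrib (x i) (x 0) μ μ)
    (hmom8 : Integrable (fun ω => |x 0 ω| ^ 8) μ) (i m : ℕ) (hm : m ≤ 8) :
    Integrable (fun ω => x i ω ^ m) μ := by
  have h0 : Integrable (fun ω => x 0 ω ^ m) μ := by
    refine Integrable.mono' ((integrable_const (1:ℝ)).add hmom8)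
      (((hmeas 0).pow_const m).aestronglyMeasurable) ?_
    filter_upwards with ω
    have : ‖x 0 ω ^ m‖ = |x 0 ω| ^ m := by rw [Real.norm_eq_abs, abs_pow]
    rw [this]
    simp only [Pi.add_apply]
    rcases le_or_gt (|x 0 ω|) 1 with h | h
    · have : |x 0 ω| ^ m ≤ 1 := pow_le_one₀ (abs_nonneg _) h
      nlinarith [pow_nonneg (abs_nonneg (x 0 ω)) 8]
    · have : |x 0 ω| ^ m ≤ |x 0 ω| ^ 8 := pow_le_pow_right₀ h.le hm
      linarith
  exact (((hident i).comp (measurable_id.pow_const m)).integrable_iff).mpr h0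

lemma integral_comp_eq (hident : ∀ i, IdentDistrib (x i) (x 0) μ μ) (i : ℕ)
    (u : ℝ → ℝ) (hu : Measurable u) :
    ∫ ω, u (x i ω) ∂μ = ∫ ω, u (x 0 ω) ∂μ :=
  ((hident i).comp hu).integral_eq

lemma mean_eq_zero (hident : ∀ i, IdentDistrib (x i) (x 0) μ μ)
    (hmean : μ[x 0] = 0) (i : ℕ) : ∫ ω, x i ω ∂μ = 0 := by
  have := integral_comp_eq hident i id measurable_id
  simpa using this.trans hmean

lemma var_eq_one (hident : ∀ i, IdentDistrib (x i) (x 0) μ μ)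
    (hvar : ∫ ω, (x 0 ω) ^ 2 ∂μ = 1) (i : ℕ) : ∫ ω, x i ω ^ 2 ∂μ = 1 := by
  have := integral_comp_eq hident i (fun t => t ^ 2) (measurable_id.pow_const 2)
  simpa using this.trans hvar

lemma integral_pow_le_kappa
    (hmeas : ∀ i, Measurable (x i)) (hident : ∀ i, IdentDistrib (x i) (x 0) μ μ)
    (hmom8 : Integrable (fun ω => |x 0 ω| ^ 8) μ) (i m : ℕ) (hm : m ≤ 8) :
    ∫ ω, x i ω ^ m ∂μ ≤ 1 + ∫ ω, |x 0 ω| ^ 8 ∂μ := by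
  have hint := integrable_comp_pow hmeas hident hmom8 i m hm
  have heq : ∫ ω, x i ω ^ m ∂μ = ∫ ω, x 0 ω ^ m ∂μ :=
    integral_comp_eq hident i (fun t => t ^ m) (measurable_id.pow_const m)
  rw [heq]
  have hint0 := integrable_comp_pow hmeas hident hmom8 0 m hm
  have hle : ∀ ω, x 0 ω ^ m ≤ 1 + |x 0 ω| ^ 8 := by
    intro ω
    have h1 : x 0 ω ^ m ≤ |x 0 ω| ^ m := by
      rw [← abs_pow]; exact le_abs_self _
    rcases le_or_gt (|x 0 ω|) 1 with h | h
    · have : |x 0 ω| ^ m ≤ 1 := pow_le_one₀ (abs_nonneg _) h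
      nlinarith [pow_nonneg (abs_nonneg (x 0 ω)) 8]
    · have : |x 0 ω| ^ m ≤ |x 0 ω| ^ 8 := pow_le_pow_right₀ h.le hm
      linarith
  calc ∫ ω, x 0 ω ^ m ∂μ ≤ ∫ ω, (1 + |x 0 ω| ^ 8) ∂μ :=
        integral_mono hint0 ((integrable_const 1).add hmom8) hle
    _ = 1 + ∫ ω, |x 0 ω| ^ 8 ∂μ := by
        rw [integral_add (integrable_const 1) hmom8]; simp

lemma integral_sq_sub_one (hmeas : ∀ i, Measurable (x i))
    (hident : ∀ i, IdentDistrib (x i) (x 0) μ μ)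
    (hvar : ∫ ω, (x 0 ω) ^ 2 ∂μ = 1)
    (hmom8 : Integrable (fun ω => |x 0 ω| ^ 8) μ) (i : ℕ) :
    ∫ ω, (x i ω ^ 2 - 1) ∂μ = 0 := by
  have h2 := integrable_comp_pow hmeas hident hmom8 i 2 (by norm_num)
  rw [integral_sub h2 (integrable_const 1)]
  rw [var_eq_one hident hvar i]
  simp

lemma integrable_sq_sub_one_pow4 (hmeas : ∀ i, Measurable (x i))
    (hident : ∀ i, IdentDistrib (x i) (x 0) μ μ)
    (hmom8 : Integrable (fun ω => |x 0 ω| ^ 8) μ) (i : ℕ) :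
    Integrable (fun ω => (x i ω ^ 2 - 1) ^ 4) μ := by
  refine Integrable.mono' (((integrable_const (8:ℝ)).add
      ((integrable_comp_pow hmeas hident hmom8 i 8 le_rfl).const_mul 8)))
    ?_ ?_
  · exact ((((hmeas i).pow_const 2).sub measurable_const).pow_const 4).aestronglyMeasurable
  · filter_upwards with ω
    have h8 : x i ω ^ 8 = (x i ω ^ 2) ^ 4 := by ring
    have key : (x i ω ^ 2 - 1) ^ 4 ≤ 8 * (x i ω ^ 2) ^ 4 + 8 := by
      nlinarith [sq_nonneg (x i ω ^ 2 - 1), sq_nonneg (x i ω ^ 2 + 1),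
        sq_nonneg ((x i ω ^ 2 - 1) ^ 2 - 2 * (x i ω^2)^2), sq_nonneg ((x i ω^2-1)^2 - 2),
        sq_nonneg (x i ω), sq_nonneg ((x i ω^2)^2 - 1)]
    have hnn : (0:ℝ) ≤ (x i ω ^ 2 - 1) ^ 4 := by positivity
    rw [Real.norm_eq_abs, abs_of_nonneg hnn]
    calc (x i ω ^ 2 - 1) ^ 4 ≤ 8 * (x i ω ^ 2) ^ 4 + 8 := key
      _ = 8 + 8 * x i ω ^ 8 := by ring
 
lemma integral_sq_sub_one_pow4_le (hmeas : ∀ i, Measurable (x i))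
    (hident : ∀ i, IdentDistrib (x i) (x 0) μ μ)
    (hmom8 : Integrable (fun ω => |x 0 ω| ^ 8) μ) (i : ℕ) :
    ∫ ω, (x i ω ^ 2 - 1) ^ 4 ∂μ ≤ 16 * (1 + ∫ ω, |x 0 ω| ^ 8 ∂μ) := by
  have h8 := integrable_comp_pow hmeas hident hmom8 i 8 le_rfl
  have hint := integrable_sq_sub_one_pow4 hmeas hident hmom8 i
  have hle : ∀ ω, (x i ω ^ 2 - 1) ^ 4 ≤ 8 + 8 * x i ω ^ 8 := by
    intro ω
    nlinarith [sq_nonneg (x i ω ^ 2 - 1), sq_nonneg (x i ω ^ 2 + 1),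
      sq_nonneg ((x i ω ^ 2 - 1) ^ 2 - 2 * (x i ω^2)^2), sq_nonneg ((x i ω^2-1)^2 - 2),
      sq_nonneg (x i ω), sq_nonneg ((x i ω^2)^2 - 1)]
  calc ∫ ω, (x i ω ^ 2 - 1) ^ 4 ∂μ ≤ ∫ ω, (8 + 8 * x i ω ^ 8) ∂μ :=
        integral_mono hint ((integrable_const 8).add (h8.const_mul 8)) hle
    _ = 8 + 8 * ∫ ω, x i ω ^ 8 ∂μ := by
        rw [integral_add (integrable_const 8) (h8.const_mul 8), MeasureTheory.integral_const_mul]; simp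
    _ ≤ 8 + 8 * (1 + ∫ ω, |x 0 ω| ^ 8 ∂μ) := by
        have := integral_pow_le_kappa hmeas hident hmom8 i 8 le_rfl
        linarith
    _ ≤ 8 * (1 + ∫ ω, |x 0 ω| ^ 8 ∂μ) + 8 * (1 + ∫ ω, |x 0 ω| ^ 8 ∂μ) := by
        have h0 : (0:ℝ) ≤ ∫ ω, |x 0 ω| ^ 8 ∂μ := by positivity
        linarith
    _ = 16 * (1 + ∫ ω, |x 0 ω| ^ 8 ∂μ) := by ring


/-! ### Linear and quadratic forms -/

variable {Ω : Type*} [MeasurableSpace Ω] {μ : Measure Ω} [IsProbabilityMeasure μ]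
  {x : ℕ → Ω → ℝ}

noncomputable def Wsum (x : ℕ → Ω → ℝ) (b : ℕ → ℝ) (n : ℕ) (ω : Ω) : ℝ :=
  ∑ j ∈ Finset.range n, b j * x j ω

noncomputable def Ssum (x : ℕ → Ω → ℝ) (a : ℕ → ℕ → ℝ) (n : ℕ) (ω : Ω) : ℝ :=
  (∑ i ∈ Finset.range n, ∑ j ∈ Finset.range n, a i j * (x i ω * x j ω))
    - ∑ i ∈ Finset.range n, a i i

lemma W_meas (hmeas : ∀ i, Measurable (x i)) (b : ℕ → ℝ) (n : ℕ) :
    Measurable (Wsum x b n) :=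
  Finset.measurable_sum _ (fun j _ => (hmeas j).const_mul _)

lemma S_meas (hmeas : ∀ i, Measurable (x i)) (a : ℕ → ℕ → ℝ) (n : ℕ) :
    Measurable (Ssum x a n) := by
  apply Measurable.sub _ measurable_const
  exact Finset.measurable_sum _ (fun i _ => Finset.measurable_sum _
    (fun j _ => (((hmeas i).mul (hmeas j)).const_mul _)))

/-- joint independence of `(Ssum, Wsum)` (functions of coordinates `< n`) from `x n`. -/
lemma indep_SW (hmeas : ∀ i, Measurable (x i))
    (hindep : iIndepFun x μ) (a : ℕ → ℕ → ℝ) (b : ℕ → ℝ) (n : ℕ) :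
    IndepFun (fun ω => (Ssum x a n ω, Wsum x b n ω)) (x n) μ := by
  classical
  let φ : (Fin n → ℝ) → ℝ × ℝ := fun v =>
    ((∑ i : Fin n, ∑ j : Fin n, a i j * (v i * v j)) - ∑ i : Fin n, a (i:ℕ) (i:ℕ),
      ∑ j : Fin n, b j * v j)
  have hφ1 : Measurable (fun v : Fin n → ℝ =>
      (∑ i : Fin n, ∑ j : Fin n, a (i:ℕ) (j:ℕ) * (v i * v j)) - ∑ i : Fin n, a (i:ℕ) (i:ℕ)) := by
    apply Measurable.sub _ measurable_const
    apply Finset.measurable_sum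
    intro i _
    apply Finset.measurable_sum
    intro j _
    exact ((measurable_pi_apply i).mul (measurable_pi_apply j)).const_mul _
  have hφ2 : Measurable (fun v : Fin n → ℝ => ∑ j : Fin n, b (j:ℕ) * v j) := by
    apply Finset.measurable_sum
    intro j _
    exact (measurable_pi_apply j).const_mul _
  have hφ : Measurable φ := hφ1.prodMk hφ2
  have h := indep_master hmeas hindep n φ hφ
  have he : (fun ω => φ (fun i => x i ω)) = (fun ω => (Ssum x a n ω, Wsum x b n ω)) := by
    funext ω
    have e1 : (∑ i : Fin n, ∑ j : Fin n, a (i:ℕ) (j:ℕ) * (x i ω * x j ω))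
        = ∑ i ∈ Finset.range n, ∑ j ∈ Finset.range n, a i j * (x i ω * x j ω) := by
      calc (∑ i : Fin n, ∑ j : Fin n, a (i:ℕ) (j:ℕ) * (x i ω * x j ω))
          = ∑ i : Fin n, ∑ j ∈ Finset.range n, a (i:ℕ) j * (x i ω * x j ω) :=
            Finset.sum_congr rfl (fun i _ =>
              Fin.sum_univ_eq_sum_range (fun j => a (i:ℕ) j * (x (i:ℕ) ω * x j ω)) n)
        _ = ∑ i ∈ Finset.range n, ∑ j ∈ Finset.range n, a i j * (x i ω * x j ω) :=
            Fin.sum_univ_eq_sum_range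
              (fun i => ∑ j ∈ Finset.range n, a i j * (x i ω * x j ω)) n
    have e2 : (∑ i : Fin n, a (i:ℕ) (i:ℕ)) = ∑ i ∈ Finset.range n, a i i :=
      Fin.sum_univ_eq_sum_range (fun i => a i i) n
    have e3 : (∑ j : Fin n, b (j:ℕ) * x j ω) = ∑ j ∈ Finset.range n, b j * x j ω :=
      Fin.sum_univ_eq_sum_range (fun j => b j * x j ω) n
    show (_, _) = (_, _)
    unfold Ssum Wsum
    rw [← e1, ← e2, ← e3]
  rwa [he] at h

lemma indep_W (hmeas : ∀ i, Measurable (x i))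
    (hindep : iIndepFun x μ) (b : ℕ → ℝ) (n : ℕ) :
    IndepFun (Wsum x b n) (x n) μ := by
  have h := (indep_SW hmeas hindep (fun _ _ => 0) b n).comp measurable_snd measurable_id
  exact h

/-- helper : integrability of lower powers from integrability of the 4-th power. -/
lemma integrable_pow_of_pow4 {f : Ω → ℝ} (hm : AEStronglyMeasurable f μ)
    (h4 : Integrable (fun ω => f ω^4) μ) (m : ℕ) (hle : m ≤ 4) :
    Integrable (fun ω => f ω^m) μ := by
  refine Integrable.mono' ((integrable_const (1:ℝ)).add h4) ?_ ?_
  · exact (hm.aemeasurable.pow_const m).aestronglyMeasurable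
  · filter_upwards with ω
    simp only [Pi.add_apply]
    have : ‖f ω ^ m‖ = |f ω| ^ m := by rw [Real.norm_eq_abs, abs_pow]
    rw [this]
    have h4' : |f ω| ^ 4 = f ω ^ 4 := by rw [← abs_pow]; exact abs_of_nonneg (by positivity)
    rcases le_or_gt (|f ω|) 1 with h | h
    · have : |f ω| ^ m ≤ 1 := pow_le_one₀ (abs_nonneg _) h
      nlinarith [pow_nonneg (abs_nonneg (f ω)) 4]
    · have : |f ω| ^ m ≤ |f ω| ^ 4 := pow_le_pow_right₀ h.le hle
      nlinarith

lemma int_x (hmeas : ∀ i, Measurable (x i)) (hident : ∀ i, IdentDistrib (x i) (x 0) μ μ)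
    (hmom8 : Integrable (fun ω => |x 0 ω| ^ 8) μ) (i : ℕ) : Integrable (x i) μ := by
  simpa only [pow_one] using integrable_comp_pow hmeas hident hmom8 i 1 (by norm_num)

lemma W_int (hmeas : ∀ i, Measurable (x i)) (hident : ∀ i, IdentDistrib (x i) (x 0) μ μ)
    (hmom8 : Integrable (fun ω => |x 0 ω| ^ 8) μ) (b : ℕ → ℝ) (n : ℕ) :
    Integrable (Wsum x b n) μ := by
  apply integrable_finset_sum
  intro j _
  exact (int_x hmeas hident hmom8 j).const_mul _

lemma W_mean (hmeas : ∀ i, Measurable (x i)) (hident : ∀ i, IdentDistrib (x i) (x 0) μ μ)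
    (hmean : μ[x 0] = 0)
    (hmom8 : Integrable (fun ω => |x 0 ω| ^ 8) μ) (b : ℕ → ℝ) (n : ℕ) :
    ∫ ω, Wsum x b n ω ∂μ = 0 := by
  unfold Wsum
  rw [integral_finset_sum _ (fun j _ => (int_x hmeas hident hmom8 j).const_mul _)]
  have : ∀ j ∈ Finset.range n, ∫ ω, b j * x j ω ∂μ = 0 := by
    intro j _
    rw [MeasureTheory.integral_const_mul, mean_eq_zero hident hmean j, mul_zero]
  rw [Finset.sum_congr rfl this, Finset.sum_const_zero]

lemma W_sq (hmeas : ∀ i, Measurable (x i))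
    (hindep : iIndepFun x μ)
    (hident : ∀ i, IdentDistrib (x i) (x 0) μ μ)
    (hmean : μ[x 0] = 0) (hvar : ∫ ω, (x 0 ω) ^ 2 ∂μ = 1)
    (hmom8 : Integrable (fun ω => |x 0 ω| ^ 8) μ) (b : ℕ → ℝ) (n : ℕ) :
    Integrable (fun ω => Wsum x b n ω ^ 2) μ ∧
      ∫ ω, Wsum x b n ω ^ 2 ∂μ = ∑ j ∈ Finset.range n, (b j)^2 := by
  induction n with
  | zero =>
      constructor
      · simpa [Wsum] using (integrable_const (0:ℝ))
      · simp [Wsum]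
  | succ n ih =>
      have hW := indep_W hmeas hindep b n
      have hWint : Integrable (Wsum x b n) μ := W_int hmeas hident hmom8 b n
      have hx1 : Integrable (x n) μ := int_x hmeas hident hmom8 n
      have hx2 : Integrable (fun ω => x n ω ^ 2) μ :=
        integrable_comp_pow hmeas hident hmom8 n 2 (by norm_num)
      have hWx : Integrable (fun ω => Wsum x b n ω * x n ω) μ := hW.integrable_mul hWint hx1
      have e : (fun ω => Wsum x b (n+1) ω ^ 2)
          = fun ω => Wsum x b n ω ^ 2 + ((2 * b n) * (Wsum x b n ω * x n ω)
              + (b n)^2 * (x n ω)^2) := by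
        funext ω
        have hstep : Wsum x b (n+1) ω = Wsum x b n ω + b n * x n ω :=
          Finset.sum_range_succ _ n
        rw [hstep]; ring
      have hint2 : Integrable (fun ω => (2 * b n) * (Wsum x b n ω * x n ω)
          + (b n)^2 * (x n ω)^2) μ := (hWx.const_mul _).add (hx2.const_mul _)
      have hWxval : ∫ ω, Wsum x b n ω * x n ω ∂μ
          = (∫ ω, Wsum x b n ω ∂μ) * ∫ ω, x n ω ∂μ :=
        hW.integral_mul_eq_mul_integral hWint.aestronglyMeasurable hx1.aestronglyMeasurable
      constructor
      · rw [e]; exact ih.1.add hint2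
      · rw [e, integral_add ih.1 hint2,
          integral_add (hWx.const_mul _) (hx2.const_mul _),
          MeasureTheory.integral_const_mul, MeasureTheory.integral_const_mul,
          hWxval,
          W_mean hmeas hident hmean hmom8 b n, var_eq_one hident hvar n, ih.2,
          Finset.sum_range_succ]
        ring

lemma W_four (hmeas : ∀ i, Measurable (x i))
    (hindep : iIndepFun x μ)
    (hident : ∀ i, IdentDistrib (x i) (x 0) μ μ)
    (hmean : μ[x 0] = 0) (hvar : ∫ ω, (x 0 ω) ^ 2 ∂μ = 1)
    (hmom8 : Integrable (fun ω => |x 0 ω| ^ 8) μ) (b : ℕ → ℝ) (n : ℕ) :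
    Integrable (fun ω => Wsum x b n ω ^ 4) μ ∧
      ∫ ω, Wsum x b n ω ^ 4 ∂μ
        ≤ (6 + (1 + ∫ ω, |x 0 ω| ^ 8 ∂μ)) * (∑ j ∈ Finset.range n, (b j)^2)^2 := by
  have hκ0 : (0:ℝ) ≤ ∫ ω, |x 0 ω| ^ 8 ∂μ := by positivity
  induction n with
  | zero =>
      constructor
      · simpa [Wsum] using (integrable_const (0:ℝ))
      · simp [Wsum]
  | succ n ih =>
      have hW := indep_W hmeas hindep b n
      have hWint : Integrable (Wsum x b n) μ := W_int hmeas hident hmom8 b n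
      have hWaesm : AEStronglyMeasurable (Wsum x b n) μ :=
        (W_meas hmeas b n).aestronglyMeasurable
      have hx1 : Integrable (x n) μ := int_x hmeas hident hmom8 n
      have hx2 : Integrable (fun ω => x n ω ^ 2) μ :=
        integrable_comp_pow hmeas hident hmom8 n 2 (by norm_num)
      have hx3 : Integrable (fun ω => x n ω ^ 3) μ :=
        integrable_comp_pow hmeas hident hmom8 n 3 (by norm_num)
      have hx4 : Integrable (fun ω => x n ω ^ 4) μ :=
        integrable_comp_pow hmeas hident hmom8 n 4 (by norm_num)
      have hW2 : Integrable (fun ω => Wsum x b n ω ^ 2) μ :=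
        (W_sq hmeas hindep hident hmean hvar hmom8 b n).1
      have hW3 : Integrable (fun ω => Wsum x b n ω ^ 3) μ :=
        integrable_pow_of_pow4 hWaesm ih.1 3 (by norm_num)
      -- independence of powers
      have hW3x : IndepFun (fun ω => Wsum x b n ω ^ 3) (fun ω => x n ω) μ :=
        hW.comp (measurable_id.pow_const 3) measurable_id
      have hW2x : IndepFun (fun ω => Wsum x b n ω ^ 2) (fun ω => x n ω ^ 2) μ :=
        hW.comp (measurable_id.pow_const 2) (measurable_id.pow_const 2)
      have hW1x : IndepFun (fun ω => Wsum x b n ω) (fun ω => x n ω ^ 3) μ :=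
        hW.comp measurable_id (measurable_id.pow_const 3)
      have hiW3x : Integrable (fun ω => Wsum x b n ω ^ 3 * x n ω) μ :=
        hW3x.integrable_mul hW3 hx1
      have hiW2x : Integrable (fun ω => Wsum x b n ω ^ 2 * x n ω ^ 2) μ :=
        hW2x.integrable_mul hW2 hx2
      have hiW1x : Integrable (fun ω => Wsum x b n ω * x n ω ^ 3) μ :=
        hW1x.integrable_mul hWint hx3
      have e : (fun ω => Wsum x b (n+1) ω ^ 4)
          = fun ω => Wsum x b n ω ^ 4 +
              ((4 * b n) * (Wsum x b n ω ^ 3 * x n ω)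
              + ((6 * (b n)^2) * (Wsum x b n ω ^ 2 * x n ω ^ 2)
              + ((4 * (b n)^3) * (Wsum x b n ω * x n ω ^ 3)
              + (b n)^4 * x n ω ^ 4))) := by
        funext ω
        have hstep : Wsum x b (n+1) ω = Wsum x b n ω + b n * x n ω :=
          Finset.sum_range_succ _ n
        rw [hstep]; ring
      have hintrest : Integrable (fun ω =>
          (4 * b n) * (Wsum x b n ω ^ 3 * x n ω)
          + ((6 * (b n)^2) * (Wsum x b n ω ^ 2 * x n ω ^ 2)
          + ((4 * (b n)^3) * (Wsum x b n ω * x n ω ^ 3)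
          + (b n)^4 * x n ω ^ 4))) μ :=
        (hiW3x.const_mul _).add ((hiW2x.const_mul _).add
          ((hiW1x.const_mul _).add (hx4.const_mul _)))
      have hr3 : Integrable (fun ω => (4 * (b n)^3) * (Wsum x b n ω * x n ω ^ 3)
          + (b n)^4 * x n ω ^ 4) μ := (hiW1x.const_mul _).add (hx4.const_mul _)
      have hr2 : Integrable (fun ω => (6 * (b n)^2) * (Wsum x b n ω ^ 2 * x n ω ^ 2)
          + ((4 * (b n)^3) * (Wsum x b n ω * x n ω ^ 3)
          + (b n)^4 * x n ω ^ 4)) μ := (hiW2x.const_mul _).add hr3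
      have hv3 : ∫ ω, Wsum x b n ω ^ 3 * x n ω ∂μ
          = (∫ ω, Wsum x b n ω ^ 3 ∂μ) * ∫ ω, x n ω ∂μ :=
        hW3x.integral_mul_eq_mul_integral hW3.aestronglyMeasurable hx1.aestronglyMeasurable
      have hv2 : ∫ ω, Wsum x b n ω ^ 2 * x n ω ^ 2 ∂μ
          = (∫ ω, Wsum x b n ω ^ 2 ∂μ) * ∫ ω, x n ω ^ 2 ∂μ :=
        hW2x.integral_mul_eq_mul_integral hW2.aestronglyMeasurable hx2.aestronglyMeasurable
      have hv1 : ∫ ω, Wsum x b n ω * x n ω ^ 3 ∂μ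
          = (∫ ω, Wsum x b n ω ∂μ) * ∫ ω, x n ω ^ 3 ∂μ :=
        hW1x.integral_mul_eq_mul_integral hWint.aestronglyMeasurable hx3.aestronglyMeasurable
      constructor
      · rw [e]; exact ih.1.add hintrest
      · rw [e, integral_add ih.1 hintrest,
          integral_add (hiW3x.const_mul _) hr2,
          integral_add (hiW2x.const_mul _) hr3,
          integral_add (hiW1x.const_mul _) (hx4.const_mul _),
          MeasureTheory.integral_const_mul, MeasureTheory.integral_const_mul,
          MeasureTheory.integral_const_mul, MeasureTheory.integral_const_mul,
          hv3, hv2, hv1,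
          mean_eq_zero hident hmean n, var_eq_one hident hvar n,
          W_mean hmeas hident hmean hmom8 b n,
          (W_sq hmeas hindep hident hmean hvar hmom8 b n).2]
        have hx4κ : ∫ ω, x n ω ^ 4 ∂μ ≤ 1 + ∫ ω, |x 0 ω| ^ 8 ∂μ :=
          integral_pow_le_kappa hmeas hident hmom8 n 4 (by norm_num)
        have hx4nn : (0:ℝ) ≤ ∫ ω, x n ω ^ 4 ∂μ := by positivity
        have hσnn : (0:ℝ) ≤ ∑ j ∈ Finset.range n, (b j)^2 := by positivity
        have hih := ih.2
        rw [Finset.sum_range_succ]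
        nlinarith [sq_nonneg (b n), sq_nonneg (b n ^ 2),
          mul_nonneg hσnn (sq_nonneg (b n)), sq_nonneg (∑ j ∈ Finset.range n, (b j)^2)]

/-! ### The increment `Z` and its fourth moment -/

lemma Z_meas (hmeas : ∀ i, Measurable (x i)) (a : ℕ → ℕ → ℝ) (n : ℕ) :
    Measurable (fun ω => a n n * (x n ω^2 - 1) + 2 * x n ω * Wsum x (a n) n ω) := by
  apply Measurable.add
  · exact (((hmeas n).pow_const 2).sub measurable_const).const_mul _
  · exact ((hmeas n).const_mul 2).mul (W_meas hmeas (a n) n)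

lemma Z_four (hmeas : ∀ i, Measurable (x i))
    (hindep : iIndepFun x μ)
    (hident : ∀ i, IdentDistrib (x i) (x 0) μ μ)
    (hmean : μ[x 0] = 0) (hvar : ∫ ω, (x 0 ω) ^ 2 ∂μ = 1)
    (hmom8 : Integrable (fun ω => |x 0 ω| ^ 8) μ) (a : ℕ → ℕ → ℝ) (n : ℕ) :
    Integrable (fun ω => (a n n * (x n ω^2 - 1) + 2 * x n ω * Wsum x (a n) n ω)^4) μ ∧
      ∫ ω, (a n n * (x n ω^2 - 1) + 2 * x n ω * Wsum x (a n) n ω)^4 ∂μ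
        ≤ (128 * (1 + ∫ ω, |x 0 ω| ^ 8 ∂μ) * (7 + ∫ ω, |x 0 ω| ^ 8 ∂μ))
          * ((a n n)^2 + ∑ j ∈ Finset.range n, (a n j)^2)^2 := by
  set I := ∫ ω, |x 0 ω| ^ 8 ∂μ with hI
  have hI0 : (0:ℝ) ≤ I := by rw [hI]; positivity
  have hW4 := W_four hmeas hindep hident hmean hvar hmom8 (a n) n
  have hx4 : Integrable (fun ω => x n ω ^ 4) μ :=
    integrable_comp_pow hmeas hident hmom8 n 4 (by norm_num)
  have hsub4 := integrable_sq_sub_one_pow4 hmeas hident hmom8 n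
  have hsub4le := integral_sq_sub_one_pow4_le hmeas hident hmom8 n
  have hWx4indep : IndepFun (fun ω => Wsum x (a n) n ω ^ 4) (fun ω => x n ω ^ 4) μ :=
    (indep_W hmeas hindep (a n) n).comp (measurable_id.pow_const 4) (measurable_id.pow_const 4)
  have hiWx4 : Integrable (fun ω => Wsum x (a n) n ω ^ 4 * x n ω ^ 4) μ :=
    hWx4indep.integrable_mul hW4.1 hx4
  have hvWx4 : ∫ ω, Wsum x (a n) n ω ^ 4 * x n ω ^ 4 ∂μ
      = (∫ ω, Wsum x (a n) n ω ^ 4 ∂μ) * ∫ ω, x n ω ^ 4 ∂μ :=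
    hWx4indep.integral_mul_eq_mul_integral hW4.1.aestronglyMeasurable hx4.aestronglyMeasurable
  have hg : Integrable (fun ω => 8 * (a n n)^4 * (x n ω^2 - 1)^4
      + 128 * (Wsum x (a n) n ω ^ 4 * x n ω ^ 4)) μ :=
    (hsub4.const_mul _).add (hiWx4.const_mul _)
  have hpw : ∀ ω, (a n n * (x n ω^2 - 1) + 2 * x n ω * Wsum x (a n) n ω)^4
      ≤ 8 * (a n n)^4 * (x n ω^2 - 1)^4 + 128 * (Wsum x (a n) n ω ^ 4 * x n ω ^ 4) := by
    intro ω
    have h := pw_add_pow4 (a n n * (x n ω^2 - 1)) (2 * x n ω * Wsum x (a n) n ω)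
    nlinarith [h]
  have hint : Integrable
      (fun ω => (a n n * (x n ω^2 - 1) + 2 * x n ω * Wsum x (a n) n ω)^4) μ := by
    refine Integrable.mono' hg ((Z_meas hmeas a n).pow_const 4).aestronglyMeasurable ?_
    filter_upwards with ω
    rw [Real.norm_eq_abs, abs_of_nonneg (by positivity)]
    exact hpw ω
  refine ⟨hint, ?_⟩
  have hmono := integral_mono hint hg hpw
  have heq : ∫ ω, (8 * (a n n)^4 * (x n ω^2 - 1)^4
      + 128 * (Wsum x (a n) n ω ^ 4 * x n ω ^ 4)) ∂μ
      = 8 * (a n n)^4 * (∫ ω, (x n ω^2 - 1)^4 ∂μ)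
        + 128 * ((∫ ω, Wsum x (a n) n ω ^ 4 ∂μ) * ∫ ω, x n ω ^ 4 ∂μ) := by
    rw [integral_add (hsub4.const_mul _) (hiWx4.const_mul _),
      MeasureTheory.integral_const_mul, MeasureTheory.integral_const_mul, hvWx4]
  rw [heq] at hmono
  have hx4le : ∫ ω, x n ω ^ 4 ∂μ ≤ 1 + I :=
    integral_pow_le_kappa hmeas hident hmom8 n 4 (by norm_num)
  have hx4nn : (0:ℝ) ≤ ∫ ω, x n ω ^ 4 ∂μ := by positivity
  have hW4nn : (0:ℝ) ≤ ∫ ω, Wsum x (a n) n ω ^ 4 ∂μ := by positivity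
  have hW4le := hW4.2
  have hsnn : (0:ℝ) ≤ ∑ j ∈ Finset.range n, (a n j)^2 := by positivity
  have hc2 : (0:ℝ) ≤ (a n n)^2 := sq_nonneg _
  refine hmono.trans ?_
  nlinarith [mul_le_mul hW4le hx4le hx4nn (by positivity :
      (0:ℝ) ≤ (6 + (1 + I)) * (∑ j ∈ Finset.range n, (a n j)^2)^2),
    mul_nonneg hc2 hsnn, sq_nonneg ((a n n)^2 + ∑ j ∈ Finset.range n, (a n j)^2),
    mul_nonneg (mul_nonneg hc2 hc2) hI0, mul_nonneg (mul_nonneg hsnn hsnn) hI0,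
    mul_nonneg (mul_nonneg hc2 hsnn) hI0]

/-! ### Fourth moment of the quadratic form -/

lemma S_step (a : ℕ → ℕ → ℝ) (ha : ∀ i j, a i j = a j i) (n : ℕ) (ω : Ω) :
    Ssum x a (n+1) ω = Ssum x a n ω
      + (a n n * (x n ω^2 - 1) + 2 * x n ω * Wsum x (a n) n ω) := by
  unfold Ssum Wsum
  rw [Finset.sum_range_succ (fun i => ∑ j ∈ Finset.range (n+1), a i j * (x i ω * x j ω)) n,
    Finset.sum_range_succ (fun j => a n j * (x n ω * x j ω)) n,
    Finset.sum_range_succ (fun i => a i i) n]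
  have e1 : ∀ i ∈ Finset.range n, (∑ j ∈ Finset.range (n+1), a i j * (x i ω * x j ω))
      = (∑ j ∈ Finset.range n, a i j * (x i ω * x j ω)) + a i n * (x i ω * x n ω) :=
    fun i _ => Finset.sum_range_succ _ n
  rw [Finset.sum_congr rfl e1, Finset.sum_add_distrib]
  have e2 : ∑ i ∈ Finset.range n, a i n * (x i ω * x n ω)
      = x n ω * ∑ i ∈ Finset.range n, a n i * x i ω := by
    rw [Finset.mul_sum]
    exact Finset.sum_congr rfl (fun i _ => by rw [ha i n]; ring)
  have e3 : ∑ j ∈ Finset.range n, a n j * (x n ω * x j ω)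
      = x n ω * ∑ j ∈ Finset.range n, a n j * x j ω := by
    rw [Finset.mul_sum]
    exact Finset.sum_congr rfl (fun j _ => by ring)
  rw [e2, e3]
  ring

set_option maxHeartbeats 2000000 in
lemma S_four (hmeas : ∀ i, Measurable (x i))
    (hindep : iIndepFun x μ)
    (hident : ∀ i, IdentDistrib (x i) (x 0) μ μ)
    (hmean : μ[x 0] = 0) (hvar : ∫ ω, (x 0 ω) ^ 2 ∂μ = 1)
    (hmom8 : Integrable (fun ω => |x 0 ω| ^ 8) μ)
    (a : ℕ → ℕ → ℝ) (ha : ∀ i j, a i j = a j i) (n : ℕ) :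
    Integrable (fun ω => Ssum x a n ω ^ 4) μ ∧
      ∫ ω, Ssum x a n ω ^ 4 ∂μ
        ≤ (4 * Real.sqrt (128 * (1 + ∫ ω, |x 0 ω| ^ 8 ∂μ) * (7 + ∫ ω, |x 0 ω| ^ 8 ∂μ))
            * ∑ m ∈ Finset.range n, ((a m m)^2 + ∑ j ∈ Finset.range m, (a m j)^2))^2 := by
  set I := ∫ ω, |x 0 ω| ^ 8 ∂μ with hI
  have hI0 : (0:ℝ) ≤ I := by rw [hI]; positivity
  set Kc := 128 * (1 + I) * (7 + I) with hKc
  have hKc0 : (0:ℝ) ≤ Kc := by rw [hKc]; positivity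
  induction n with
  | zero =>
      constructor
      · simpa [Ssum] using (integrable_const (0:ℝ))
      · simp [Ssum]
  | succ n ih =>
      -- abbreviations
      set St := Ssum x a n with hSt
      set Wt := Wsum x (a n) n with hWt
      have hZfour := Z_four hmeas hindep hident hmean hvar hmom8 a n
      set Zt : Ω → ℝ := fun ω => a n n * (x n ω^2 - 1) + 2 * x n ω * Wt ω with hZt
      have hZ4 : Integrable (fun ω => Zt ω ^ 4) μ := hZfour.1
      have hZbd : ∫ ω, Zt ω ^ 4 ∂μ ≤ Kc * ((a n n)^2 + ∑ j ∈ Finset.range n, (a n j)^2)^2 :=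
        hZfour.2
      have hSmeas : Measurable St := S_meas hmeas a n
      have hZmeas : Measurable Zt := Z_meas hmeas a n
      have hS4 : Integrable (fun ω => St ω ^ 4) μ := ih.1
      have hSaesm : AEStronglyMeasurable St μ := hSmeas.aestronglyMeasurable
      have hZaesm : AEStronglyMeasurable Zt μ := hZmeas.aestronglyMeasurable
      have hWmeas : Measurable Wt := W_meas hmeas (a n) n
      -- integrability of the various pieces
      have hS3 : Integrable (fun ω => St ω ^ 3) μ :=
        integrable_pow_of_pow4 hSaesm hS4 3 (by norm_num)
      have hx1 : Integrable (x n) μ := int_x hmeas hident hmom8 n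
      have hx2 : Integrable (fun ω => x n ω ^ 2) μ :=
        integrable_comp_pow hmeas hident hmom8 n 2 (by norm_num)
      have hsub : Integrable (fun ω => x n ω ^ 2 - 1) μ := hx2.sub (integrable_const 1)
      have hsub4 := integrable_sq_sub_one_pow4 hmeas hident hmom8 n
      have hW4 : Integrable (fun ω => Wt ω ^ 4) μ :=
        (W_four hmeas hindep hident hmean hvar hmom8 (a n) n).1
      -- A and B : the two pieces of S^3 * Z
      have hiA : Integrable (fun ω => St ω ^ 3 * (x n ω ^ 2 - 1)) μ := by
        refine Integrable.mono' (((hS4.const_mul 3).add hsub4).div_const 4)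
          ((hSmeas.pow_const 3).mul (((hmeas n).pow_const 2).sub
            measurable_const)).aestronglyMeasurable ?_
        filter_upwards with ω
        have := pw_cube_mul (St ω) (x n ω ^ 2 - 1)
        rw [Real.norm_eq_abs]
        simpa using this
      have hiS3W : Integrable (fun ω => St ω ^ 3 * Wt ω) μ := by
        refine Integrable.mono' (((hS4.const_mul 3).add hW4).div_const 4)
          ((hSmeas.pow_const 3).mul hWmeas).aestronglyMeasurable ?_
        filter_upwards with ω
        have := pw_cube_mul (St ω) (Wt ω)
        rw [Real.norm_eq_abs]
        simpa using this
      have hindSsub : IndepFun (fun ω => St ω ^ 3) (fun ω => x n ω ^ 2 - 1) μ :=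
        (indep_SW hmeas hindep a (a n) n).comp
          (measurable_fst.pow_const 3) ((measurable_id.pow_const 2).sub measurable_const)
      have hindS3W : IndepFun (fun ω => St ω ^ 3 * Wt ω) (fun ω => x n ω) μ :=
        (indep_SW hmeas hindep a (a n) n).comp
          ((measurable_fst.pow_const 3).mul measurable_snd) measurable_id
      have hiB : Integrable (fun ω => St ω ^ 3 * Wt ω * x n ω) μ :=
        hindS3W.integrable_mul hiS3W hx1
      have hvA : ∫ ω, St ω ^ 3 * (x n ω ^ 2 - 1) ∂μ = 0 := by
        have h' : ∫ ω, St ω ^ 3 * (x n ω ^ 2 - 1) ∂μ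
            = (∫ ω, St ω ^ 3 ∂μ) * ∫ ω, (x n ω ^ 2 - 1) ∂μ :=
          hindSsub.integral_mul_eq_mul_integral hS3.aestronglyMeasurable hsub.aestronglyMeasurable
        rw [h', integral_sq_sub_one hmeas hident hvar hmom8 n, mul_zero]
      have hvB : ∫ ω, St ω ^ 3 * Wt ω * x n ω ∂μ = 0 := by
        have h' : ∫ ω, St ω ^ 3 * Wt ω * x n ω ∂μ
            = (∫ ω, St ω ^ 3 * Wt ω ∂μ) * ∫ ω, x n ω ∂μ :=
          hindS3W.integral_mul_eq_mul_integral hiS3W.aestronglyMeasurable hx1.aestronglyMeasurable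
        rw [h', mean_eq_zero hident hmean n, mul_zero]
      -- S^2 Z^2 and S Z^3
      have hiS2Z2 : Integrable (fun ω => St ω ^ 2 * Zt ω ^ 2) μ := by
        refine Integrable.mono' ((hS4.add hZ4).div_const 2)
          ((hSmeas.pow_const 2).mul (hZmeas.pow_const 2)).aestronglyMeasurable ?_
        filter_upwards with ω
        rw [Real.norm_eq_abs, abs_of_nonneg (by positivity)]
        simpa using pw_sq_sq (St ω) (Zt ω)
      have hiSZ3 : Integrable (fun ω => St ω * Zt ω ^ 3) μ := by
        refine Integrable.mono' (((hS4.add (hZ4.const_mul 3))).div_const 4)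
          (hSmeas.mul (hZmeas.pow_const 3)).aestronglyMeasurable ?_
        filter_upwards with ω
        rw [Real.norm_eq_abs]
        have h1 := pw_mul_cube (St ω) (Zt ω)
        have h2 := pw_sq_sq (St ω) (Zt ω)
        simp only [Pi.add_apply]
        nlinarith [h1, h2]
      -- Cauchy-Schwarz
      have hCS : ∫ ω, St ω ^ 2 * Zt ω ^ 2 ∂μ
          ≤ Real.sqrt (∫ ω, St ω ^ 4 ∂μ) * Real.sqrt (∫ ω, Zt ω ^ 4 ∂μ) :=
        integral_sq_sq_le hSaesm hZaesm hS4 hZ4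
      have hSZ3le : ∫ ω, St ω * Zt ω ^ 3 ∂μ
          ≤ ((∫ ω, St ω ^ 2 * Zt ω ^ 2 ∂μ) + ∫ ω, Zt ω ^ 4 ∂μ)/2 := by
        have hmono : ∫ ω, St ω * Zt ω ^ 3 ∂μ
            ≤ ∫ ω, (St ω ^ 2 * Zt ω ^ 2 + Zt ω ^ 4)/2 ∂μ := by
          refine integral_mono hiSZ3 ((hiS2Z2.add hZ4).div_const 2) ?_
          intro ω
          have h1 := pw_mul_cube (St ω) (Zt ω)
          have h2 := le_abs_self (St ω * Zt ω ^ 3)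
          exact h2.trans h1
        rw [integral_div, integral_add hiS2Z2 hZ4] at hmono
        exact hmono
      -- expansion of the fourth power
      have e : (fun ω => Ssum x a (n+1) ω ^ 4)
          = fun ω => St ω ^ 4 + ((4 * a n n) * (St ω ^ 3 * (x n ω ^ 2 - 1))
            + (8 * (St ω ^ 3 * Wt ω * x n ω)
            + (6 * (St ω ^ 2 * Zt ω ^ 2)
            + (4 * (St ω * Zt ω ^ 3) + Zt ω ^ 4)))) := by
        funext ω
        rw [S_step a ha n ω]
        show (St ω + Zt ω)^4 = _
        rw [hZt]
        ring
      have hr4 : Integrable (fun ω => 4 * (St ω * Zt ω ^ 3) + Zt ω ^ 4) μ :=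
        (hiSZ3.const_mul 4).add hZ4
      have hr3 : Integrable (fun ω => 6 * (St ω ^ 2 * Zt ω ^ 2)
          + (4 * (St ω * Zt ω ^ 3) + Zt ω ^ 4)) μ := (hiS2Z2.const_mul 6).add hr4
      have hr2 : Integrable (fun ω => 8 * (St ω ^ 3 * Wt ω * x n ω)
          + (6 * (St ω ^ 2 * Zt ω ^ 2) + (4 * (St ω * Zt ω ^ 3) + Zt ω ^ 4))) μ :=
        (hiB.const_mul 8).add hr3
      have hr1 : Integrable (fun ω => (4 * a n n) * (St ω ^ 3 * (x n ω ^ 2 - 1))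
          + (8 * (St ω ^ 3 * Wt ω * x n ω)
          + (6 * (St ω ^ 2 * Zt ω ^ 2) + (4 * (St ω * Zt ω ^ 3) + Zt ω ^ 4)))) μ :=
        (hiA.const_mul _).add hr2
      constructor
      · rw [e]; exact hS4.add hr1
      · rw [e, integral_add hS4 hr1, integral_add (hiA.const_mul _) hr2,
          integral_add (hiB.const_mul 8) hr3, integral_add (hiS2Z2.const_mul 6) hr4,
          integral_add (hiSZ3.const_mul 4) hZ4,
          MeasureTheory.integral_const_mul, MeasureTheory.integral_const_mul,
          MeasureTheory.integral_const_mul, MeasureTheory.integral_const_mul,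
          hvA, hvB]
        -- now the numeric estimate
        set α := ∫ ω, St ω ^ 4 ∂μ with hα
        set β := ∫ ω, Zt ω ^ 4 ∂μ with hβ
        have hα0 : 0 ≤ α := by rw [hα]; positivity
        have hβ0 : 0 ≤ β := by rw [hβ]; positivity
        set t2 := (a n n)^2 + ∑ j ∈ Finset.range n, (a n j)^2 with ht2
        have ht20 : 0 ≤ t2 := by rw [ht2]; positivity
        set Sg := ∑ m ∈ Finset.range n, ((a m m)^2 + ∑ j ∈ Finset.range m, (a m j)^2) with hSg
        have hSg0 : 0 ≤ Sg := by rw [hSg]; positivity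
        have hsum : ∑ m ∈ Finset.range (n+1), ((a m m)^2 + ∑ j ∈ Finset.range m, (a m j)^2)
            = Sg + t2 := Finset.sum_range_succ _ n
        rw [hsum]
        have hsqα : Real.sqrt α ≤ 4 * Real.sqrt Kc * Sg := by
          have h := Real.sqrt_le_sqrt ih.2
          rwa [Real.sqrt_sq (by positivity)] at h
        have hsqβ : Real.sqrt β ≤ Real.sqrt Kc * t2 := by
          have h := Real.sqrt_le_sqrt hZbd
          rwa [Real.sqrt_mul hKc0, Real.sqrt_sq ht20] at h
        have hαs : α = (Real.sqrt α)^2 := (Real.sq_sqrt hα0).symm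
        have hβs : β = (Real.sqrt β)^2 := (Real.sq_sqrt hβ0).symm
        have hsa0 : 0 ≤ Real.sqrt α := Real.sqrt_nonneg _
        have hsb0 : 0 ≤ Real.sqrt β := Real.sqrt_nonneg _
        have hCS' : ∫ ω, St ω ^ 2 * Zt ω ^ 2 ∂μ ≤ Real.sqrt α * Real.sqrt β := hCS
        have hSZ3' : ∫ ω, St ω * Zt ω ^ 3 ∂μ
            ≤ ((∫ ω, St ω ^ 2 * Zt ω ^ 2 ∂μ) + β)/2 := hSZ3le
        have hKs0 : 0 ≤ Real.sqrt Kc := Real.sqrt_nonneg _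
        have hA0 : 0 ≤ 4 * Real.sqrt Kc * Sg := by positivity
        have hB0 : 0 ≤ Real.sqrt Kc * t2 := by positivity
        have hprod : Real.sqrt α * Real.sqrt β
            ≤ (4 * Real.sqrt Kc * Sg) * (Real.sqrt Kc * t2) :=
          mul_le_mul hsqα hsqβ hsb0 hA0
        have hCSI0 : 0 ≤ ∫ ω, St ω ^ 2 * Zt ω ^ 2 ∂μ := by positivity
        nlinarith [mul_le_mul hsqα hsqα hsa0 hA0, mul_le_mul hsqβ hsqβ hsb0 hB0,
          Real.sq_sqrt hKc0, mul_nonneg hA0 hB0, mul_nonneg hSg0 ht20,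
          mul_nonneg (mul_nonneg hKs0 hSg0) ht20]

/-! ### Matrix bridging lemmas -/

def Bex (M : ℕ) (B : Matrix (Fin M) (Fin M) ℝ) : ℕ → ℕ → ℝ :=
  fun i j => if h : i < M ∧ j < M then B ⟨i, h.1⟩ ⟨j, h.2⟩ else 0

noncomputable def symA (M : ℕ) (B : Matrix (Fin M) (Fin M) ℝ) : ℕ → ℕ → ℝ :=
  fun i j => (Bex M B i j + Bex M B j i)/2

lemma symA_symm (M : ℕ) (B : Matrix (Fin M) (Fin M) ℝ) (i j : ℕ) :
    symA M B i j = symA M B j i := by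
  unfold symA; ring

lemma Bex_coe (M : ℕ) (B : Matrix (Fin M) (Fin M) ℝ) (i j : Fin M) :
    Bex M B i j = B i j := by
  unfold Bex
  rw [dif_pos (⟨i.isLt, j.isLt⟩ : ((i:ℕ) < M ∧ (j:ℕ) < M))]

lemma half_sum (M : ℕ) (P : ℕ → ℕ → ℝ) :
    ∑ i ∈ Finset.range M, ∑ j ∈ Finset.range M, (P i j + P j i)/2
      = ∑ i ∈ Finset.range M, ∑ j ∈ Finset.range M, P i j := by
  have swap : ∑ i ∈ Finset.range M, ∑ j ∈ Finset.range M, P j i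
      = ∑ i ∈ Finset.range M, ∑ j ∈ Finset.range M, P i j := Finset.sum_comm
  have e1 : ∀ i, ∑ j ∈ Finset.range M, (P i j + P j i)/2
      = ((∑ j ∈ Finset.range M, P i j) + ∑ j ∈ Finset.range M, P j i)/2 := by
    intro i
    rw [← Finset.sum_add_distrib, ← Finset.sum_div]
  calc ∑ i ∈ Finset.range M, ∑ j ∈ Finset.range M, (P i j + P j i)/2
      = ∑ i ∈ Finset.range M,
          (((∑ j ∈ Finset.range M, P i j) + ∑ j ∈ Finset.range M, P j i)/2) :=
        Finset.sum_congr rfl (fun i _ => e1 i)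
    _ = ((∑ i ∈ Finset.range M, ∑ j ∈ Finset.range M, P i j)
          + ∑ i ∈ Finset.range M, ∑ j ∈ Finset.range M, P j i)/2 := by
        rw [← Finset.sum_add_distrib, ← Finset.sum_div]
    _ = ∑ i ∈ Finset.range M, ∑ j ∈ Finset.range M, P i j := by
        rw [swap]; ring

lemma sum_symA_eq (M : ℕ) (B : Matrix (Fin M) (Fin M) ℝ) (f : ℕ → ℝ) :
    ∑ i ∈ Finset.range M, ∑ j ∈ Finset.range M, symA M B i j * (f i * f j)
      = ∑ i ∈ Finset.range M, ∑ j ∈ Finset.range M, Bex M B i j * (f i * f j) := by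
  have e : ∀ i j, symA M B i j * (f i * f j)
      = ((Bex M B i j * (f i * f j)) + (Bex M B j i * (f j * f i)))/2 := by
    intro i j; unfold symA; ring
  calc ∑ i ∈ Finset.range M, ∑ j ∈ Finset.range M, symA M B i j * (f i * f j)
      = ∑ i ∈ Finset.range M, ∑ j ∈ Finset.range M,
          ((Bex M B i j * (f i * f j)) + (Bex M B j i * (f j * f i)))/2 :=
        Finset.sum_congr rfl (fun i _ => Finset.sum_congr rfl (fun j _ => e i j))
    _ = ∑ i ∈ Finset.range M, ∑ j ∈ Finset.range M, Bex M B i j * (f i * f j) :=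
        half_sum M (fun i j => Bex M B i j * (f i * f j))

lemma S_repr (M : ℕ) (B : Matrix (Fin M) (Fin M) ℝ) (f : ℕ → ℝ) :
    (∑ i : Fin M, ∑ j : Fin M, f i * B i j * f j) - Matrix.trace B
      = (∑ i ∈ Finset.range M, ∑ j ∈ Finset.range M, symA M B i j * (f i * f j))
        - ∑ i ∈ Finset.range M, symA M B i i := by
  have h1 : ∑ i : Fin M, ∑ j : Fin M, f i * B i j * f j
      = ∑ i ∈ Finset.range M, ∑ j ∈ Finset.range M, Bex M B i j * (f i * f j) := by
    calc ∑ i : Fin M, ∑ j : Fin M, f i * B i j * f j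
        = ∑ i : Fin M, ∑ j : Fin M, Bex M B i j * (f i * f j) := by
          refine Finset.sum_congr rfl (fun i _ => Finset.sum_congr rfl (fun j _ => ?_))
          rw [Bex_coe]; ring
      _ = ∑ i : Fin M, ∑ j ∈ Finset.range M, Bex M B i j * (f i * f j) :=
          Finset.sum_congr rfl (fun i _ =>
            Fin.sum_univ_eq_sum_range (fun j => Bex M B i j * (f i * f j)) M)
      _ = ∑ i ∈ Finset.range M, ∑ j ∈ Finset.range M, Bex M B i j * (f i * f j) :=
          Fin.sum_univ_eq_sum_range
            (fun i => ∑ j ∈ Finset.range M, Bex M B i j * (f i * f j)) M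
  have h2 : Matrix.trace B = ∑ i ∈ Finset.range M, symA M B i i := by
    have : Matrix.trace B = ∑ i : Fin M, B i i := rfl
    rw [this]
    calc ∑ i : Fin M, B i i = ∑ i : Fin M, symA M B i i := by
          refine Finset.sum_congr rfl (fun i _ => ?_)
          unfold symA
          rw [Bex_coe]
          ring
      _ = ∑ i ∈ Finset.range M, symA M B i i :=
          Fin.sum_univ_eq_sum_range (fun i => symA M B i i) M
  rw [h1, h2, sum_symA_eq]

lemma trace_mul_transpose (M : ℕ) (B : Matrix (Fin M) (Fin M) ℝ) :
    Matrix.trace (B * Bᵀ) = ∑ i : Fin M, ∑ j : Fin M, (B i j)^2 := by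
  have : Matrix.trace (B * Bᵀ) = ∑ i : Fin M, (B * Bᵀ) i i := rfl
  rw [this]
  refine Finset.sum_congr rfl (fun i _ => ?_)
  rw [Matrix.mul_apply]
  exact Finset.sum_congr rfl (fun j _ => by rw [Matrix.transpose_apply]; ring)

lemma sumsq_le (M : ℕ) (B : Matrix (Fin M) (Fin M) ℝ) :
    ∑ m ∈ Finset.range M, ((symA M B m m)^2 + ∑ j ∈ Finset.range m, (symA M B m j)^2)
      ≤ Matrix.trace (B * Bᵀ) := by
  have step1 : ∀ m ∈ Finset.range M,
      (symA M B m m)^2 + ∑ j ∈ Finset.range m, (symA M B m j)^2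
        ≤ ∑ j ∈ Finset.range M, (symA M B m j)^2 := by
    intro m hm
    have hmM : m < M := Finset.mem_range.mp hm
    have e : (symA M B m m)^2 + ∑ j ∈ Finset.range m, (symA M B m j)^2
        = ∑ j ∈ Finset.range (m+1), (symA M B m j)^2 := by
      rw [Finset.sum_range_succ]; ring
    rw [e]
    refine Finset.sum_le_sum_of_subset_of_nonneg ?_ (fun j _ _ => sq_nonneg _)
    exact Finset.range_subset_range.mpr hmM
  refine le_trans (Finset.sum_le_sum step1) ?_
  have step2 : ∑ i ∈ Finset.range M, ∑ j ∈ Finset.range M, (symA M B i j)^2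
      ≤ ∑ i ∈ Finset.range M, ∑ j ∈ Finset.range M,
          ((Bex M B i j)^2 + (Bex M B j i)^2)/2 := by
    refine Finset.sum_le_sum (fun i _ => Finset.sum_le_sum (fun j _ => ?_))
    unfold symA
    nlinarith [sq_nonneg (Bex M B i j - Bex M B j i)]
  refine le_trans step2 ?_
  rw [half_sum M (fun i j => (Bex M B i j)^2)]
  have step4 : ∑ i ∈ Finset.range M, ∑ j ∈ Finset.range M, (Bex M B i j)^2
      = Matrix.trace (B * Bᵀ) := by
    rw [trace_mul_transpose]
    calc ∑ i ∈ Finset.range M, ∑ j ∈ Finset.range M, (Bex M B i j)^2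
        = ∑ i : Fin M, ∑ j ∈ Finset.range M, (Bex M B i j)^2 :=
          (Fin.sum_univ_eq_sum_range (fun i => ∑ j ∈ Finset.range M, (Bex M B i j)^2) M).symm
      _ = ∑ i : Fin M, ∑ j : Fin M, (Bex M B (i:ℕ) (j:ℕ))^2 :=
          Finset.sum_congr rfl (fun i _ =>
            (Fin.sum_univ_eq_sum_range (fun j => (Bex M B i j)^2) M).symm)
      _ = ∑ i : Fin M, ∑ j : Fin M, (B i j)^2 :=
          Finset.sum_congr rfl (fun i _ => Finset.sum_congr rfl (fun j _ => by rw [Bex_coe]))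
  rw [step4]

end QF

open QF

set_option maxHeartbeats 1000000

/-- almost sure concentration of real quadratic forms around the trace. -/
theorem quadratic_form_ae_tendsto_zero
    {Ω : Type*} [MeasurableSpace Ω] (μ : Measure Ω) [IsProbabilityMeasure μ]
    (x : ℕ → Ω → ℝ) (hmeas : ∀ i, Measurable (x i))
    (hindep : iIndepFun x μ)
    (hident : ∀ i, IdentDistrib (x i) (x 0) μ μ)
    (hmean : μ[x 0] = 0)
    (hvar : ∫ ω, (x 0 ω) ^ 2 ∂μ = 1)
    (hmom8 : Integrable (fun ω => |x 0 ω| ^ 8) μ)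
    (C : ℝ)
    (B : (M : ℕ) → Matrix (Fin M) (Fin M) ℝ)
    (hB : ∀ M : ℕ, Matrix.trace (B M * (B M)ᵀ) ≤ C * (M : ℝ) ^ 2) :
    ∀ᵐ ω ∂μ, Tendsto
      (fun M : ℕ => (1 / (M : ℝ) ^ ((3 : ℝ) / 2)) *
        ((∑ i : Fin M, ∑ j : Fin M, x i ω * B M i j * x j ω) - Matrix.trace (B M)))
      atTop (nhds 0) := by
  classical
  have hSfour := fun M : ℕ => S_four hmeas hindep hident hmean hvar hmom8
      (symA M (B M)) (symA_symm M (B M)) M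
  set I := ∫ ω, |x 0 ω| ^ 8 ∂μ with hIdef
  have hI0 : (0:ℝ) ≤ I := by rw [hIdef]; positivity
  set Kc := 128 * (1 + I) * (7 + I) with hKcdef
  have hKc0 : (0:ℝ) ≤ Kc := by rw [hKcdef]; nlinarith [hI0]
  have hc160 : (0:ℝ) ≤ 16 * Kc * C^2 :=
    mul_nonneg (mul_nonneg (by norm_num) hKc0) (sq_nonneg C)
  -- the quantitative fourth-moment bound
  have hbd : ∀ M : ℕ, ∫ ω, (Ssum x (symA M (B M)) M ω)^4 ∂μ
      ≤ 16 * Kc * (C * (M:ℝ)^2)^2 := by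
    intro M
    have hsg0 : (0:ℝ) ≤ ∑ m ∈ Finset.range M,
        ((symA M (B M) m m)^2 + ∑ j ∈ Finset.range m, (symA M (B M) m j)^2) := by
      positivity
    have hsgle : (∑ m ∈ Finset.range M,
        ((symA M (B M) m m)^2 + ∑ j ∈ Finset.range m, (symA M (B M) m j)^2))
          ≤ C * (M:ℝ)^2 := le_trans (sumsq_le M (B M)) (hB M)
    have h1 := (hSfour M).2
    have h2 : (4 * Real.sqrt Kc * ∑ m ∈ Finset.range M,
        ((symA M (B M) m m)^2 + ∑ j ∈ Finset.range m, (symA M (B M) m j)^2))^2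
          ≤ (4 * Real.sqrt Kc * (C * (M:ℝ)^2))^2 := by
      apply pow_le_pow_left₀ (by positivity)
      exact mul_le_mul_of_nonneg_left hsgle (by positivity)
    have h3 : (4 * Real.sqrt Kc * (C * (M:ℝ)^2))^2 = 16 * Kc * (C * (M:ℝ)^2)^2 := by
      have hs : Real.sqrt Kc ^ 2 = Kc := Real.sq_sqrt hKc0
      linear_combination (16 * (C * (M:ℝ)^2)^2) * hs
    calc ∫ ω, (Ssum x (symA M (B M)) M ω)^4 ∂μ
        ≤ (4 * Real.sqrt Kc * ∑ m ∈ Finset.range M,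
            ((symA M (B M) m m)^2 + ∑ j ∈ Finset.range m, (symA M (B M) m j)^2))^2 := h1
      _ ≤ (4 * Real.sqrt Kc * (C * (M:ℝ)^2))^2 := h2
      _ = 16 * Kc * (C * (M:ℝ)^2)^2 := h3
  -- the normalised sequence
  set G : ℕ → Ω → ℝ := fun M ω => (1 / (M : ℝ) ^ ((3 : ℝ) / 2)) *
        ((∑ i : Fin M, ∑ j : Fin M, x i ω * B M i j * x j ω) - Matrix.trace (B M)) with hGdef
  have hGeq : ∀ M, G M = fun ω =>
      (1 / (M : ℝ) ^ ((3 : ℝ) / 2)) * Ssum x (symA M (B M)) M ω := by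
    intro M
    funext ω
    show (1 / (M : ℝ) ^ ((3 : ℝ) / 2)) *
        ((∑ i : Fin M, ∑ j : Fin M, x i ω * B M i j * x j ω) - Matrix.trace (B M)) = _
    congr 1
    exact S_repr M (B M) (fun i => x i ω)
  have hGmeas : ∀ M, Measurable (G M) := by
    intro M
    rw [hGeq M]
    exact (S_meas hmeas _ M).const_mul _
  have hGint4 : ∀ M, Integrable (fun ω => (G M ω)^4) μ := by
    intro M
    have e : (fun ω => (G M ω)^4)
        = fun ω => (1/(M:ℝ)^((3:ℝ)/2))^4 * (Ssum x (symA M (B M)) M ω)^4 := by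
      funext ω; simp only [hGeq]; ring
    rw [e]
    exact ((hSfour M).1).const_mul _
  have hGbd : ∀ M : ℕ, ∫ ω, (G M ω)^4 ∂μ ≤ (16 * Kc * C^2) * (1/((M:ℕ):ℝ)^2) := by
    intro M
    rcases Nat.eq_zero_or_pos M with hM0 | hMpos
    · subst hM0
      have e : (fun ω => (G 0 ω)^4) = fun _ => (0:ℝ) := by
        funext ω; simp only [hGeq]; simp [Ssum]
      rw [e, integral_zero]
      simp
    · have hMne : ((M:ℕ):ℝ) ≠ 0 := Nat.cast_ne_zero.mpr (Nat.pos_iff_ne_zero.mp hMpos)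
      have hMnn : (0:ℝ) ≤ (M:ℝ) := Nat.cast_nonneg M
      have e : (fun ω => (G M ω)^4)
          = fun ω => (1/(M:ℝ)^((3:ℝ)/2))^4 * (Ssum x (symA M (B M)) M ω)^4 := by
        funext ω; simp only [hGeq]; ring
      rw [e, MeasureTheory.integral_const_mul]
      have hr : (1/((M:ℝ)^((3:ℝ)/2)))^(4:ℕ) = 1/(M:ℝ)^(6:ℕ) := by
        rw [div_pow, one_pow, ← Real.rpow_natCast ((M:ℝ)^((3:ℝ)/2)) 4,
          ← Real.rpow_mul hMnn,
          show ((3:ℝ)/2) * ((4:ℕ):ℝ) = ((6:ℕ):ℝ) by norm_num,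
          Real.rpow_natCast]
      have hpos : (0:ℝ) ≤ (1/((M:ℝ)^((3:ℝ)/2)))^(4:ℕ) := by positivity
      calc (1/((M:ℝ)^((3:ℝ)/2)))^(4:ℕ) * ∫ ω, (Ssum x (symA M (B M)) M ω)^4 ∂μ
          ≤ (1/((M:ℝ)^((3:ℝ)/2)))^(4:ℕ) * (16 * Kc * (C * (M:ℝ)^2)^2) :=
            mul_le_mul_of_nonneg_left (hbd M) hpos
        _ = (1/(M:ℝ)^(6:ℕ)) * (16 * Kc * (C * (M:ℝ)^2)^2) := by rw [hr]
        _ = (16 * Kc * C^2) * (1/((M:ℕ):ℝ)^2) := by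
            field_simp
  -- summability of the bounding series
  have hsumb : Summable (fun M : ℕ => (16 * Kc * C^2) * (1/((M:ℕ):ℝ)^2)) :=
    (Summable.mul_left _ (Real.summable_one_div_nat_pow.mpr one_lt_two))
  have hbnn : ∀ M : ℕ, 0 ≤ (16 * Kc * C^2) * (1/((M:ℕ):ℝ)^2) := by
    intro M
    apply mul_nonneg hc160
    positivity
  -- pass to lintegrals
  set F : ℕ → Ω → ENNReal := fun M ω => ENNReal.ofReal ((G M ω)^4) with hFdef
  have hFmeas : ∀ M, AEMeasurable (F M) μ := fun M =>
    (((hGmeas M).pow_const 4).ennreal_ofReal).aemeasurable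
  have hFval : ∀ M, ∫⁻ ω, F M ω ∂μ = ENNReal.ofReal (∫ ω, (G M ω)^4 ∂μ) := by
    intro M
    exact (MeasureTheory.ofReal_integral_eq_lintegral_ofReal (hGint4 M)
      (Filter.Eventually.of_forall (fun ω => by positivity))).symm
  have htsum : ∑' M, ∫⁻ ω, F M ω ∂μ ≠ ⊤ := by
    have hle : ∀ M, ∫⁻ ω, F M ω ∂μ
        ≤ ENNReal.ofReal ((16 * Kc * C^2) * (1/((M:ℕ):ℝ)^2)) := by
      intro M
      rw [hFval M]
      exact ENNReal.ofReal_le_ofReal (hGbd M)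
    have h2 := ENNReal.tsum_le_tsum hle
    have h3 : ∑' M : ℕ, ENNReal.ofReal ((16 * Kc * C^2) * (1/((M:ℕ):ℝ)^2))
        = ENNReal.ofReal (∑' M : ℕ, (16 * Kc * C^2) * (1/((M:ℕ):ℝ)^2)) :=
      (ENNReal.ofReal_tsum_of_nonneg hbnn hsumb).symm
    rw [h3] at h2
    exact ne_top_of_le_ne_top ENNReal.ofReal_ne_top h2
  have hae : ∀ᵐ ω ∂μ, ∑' M, F M ω < ⊤ := by
    refine MeasureTheory.ae_lt_top' (AEMeasurable.ennreal_tsum hFmeas) ?_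
    rw [MeasureTheory.lintegral_tsum hFmeas]
    exact htsum
  filter_upwards [hae] with ω hω
  have h1 : Tendsto (fun M => F M ω) atTop (𝓝 0) :=
    ENNReal.tendsto_atTop_zero_of_tsum_ne_top hω.ne
  have h2 : Tendsto (fun M => (G M ω)^4) atTop (𝓝 0) := by
    have hcont := (ENNReal.tendsto_toReal (by simp : (0:ENNReal) ≠ ⊤)).comp h1
    simp only [ENNReal.toReal_zero] at hcont
    refine hcont.congr (fun M => ?_)
    show (F M ω).toReal = _
    simp only [hFdef]
    exact ENNReal.toReal_ofReal (by positivity)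
  have h3 : Tendsto (fun M => |G M ω|) atTop (𝓝 0) := by
    have hc : ContinuousAt (fun t : ℝ => t ^ ((1:ℝ)/4)) 0 :=
      Real.continuousAt_rpow_const 0 _ (Or.inr (by norm_num))
    have h4 := hc.tendsto.comp h2
    rw [Real.zero_rpow (by norm_num)] at h4
    refine h4.congr (fun M => ?_)
    show ((G M ω)^4) ^ ((1:ℝ)/4) = |G M ω|
    rw [show (G M ω)^4 = |G M ω|^4 by rw [← abs_pow]; exact (abs_of_nonneg (by positivity)).symm,
      ← Real.rpow_natCast (|G M ω|) 4, ← Real.rpow_mul (abs_nonneg _)]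
    norm_num
  have h5 : Tendsto (fun M => G M ω) atTop (𝓝 0) := by
    have hneg : Tendsto (fun M => -|G M ω|) atTop (𝓝 0) := by
      simpa using h3.neg
    exact tendsto_of_tendsto_of_tendsto_of_le_of_le hneg h3
      (fun M => neg_abs_le _) (fun M => le_abs_self _)
  exact h5
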